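/- Concentration plus extinction in the limit m → 0 of planar fast diffusion: let N = 2, fix M > 0 and t > 0. For each m ∈ (0,1) set α = 1/m, β = 1/(2m), k = (1-m)/(4m²), and let B_m(x,τ) = τ^{-α}(C(m) + k|x|² τ^{-2β})^{-1/(1-m)} be the Barenblatt solution of ∂_τ u = Δ(u^m) on ℝ², with C(m) > 0 chosen so that ∫_{ℝ²} B_m(x,τ) dx = M for τ > 0. Set B̃_m(x,t) = B_m(x, t/m), which solves the rescaled equation ∂_t u = div(u^{m-1}∇u). Then, as m → 0 from above: (a) for every x ≠ 0, B̃_m(x,t) → 0; and (b) for every continuous compactly supported function f : ℝ² → ℝ, ∫_{ℝ²} f(x) B̃_m(x,t) dx → max(M − 4πt, 0)·f(0); that is, B̃_m(·,t) dx converges vaguely to the measure (M − 4πt)₊ δ₀. -/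

import Mathlib

open MeasureTheory Real Filter Topology Set

noncomputable section

/-- The Barenblatt solution of the fast diffusion equation `∂_τ u = Δ(u^m)` on
`ℝ²`, with `α = 1/m`, `β = 1/(2m)`, `k = (1-m)/(4m²)`:
`B_m(x,τ) = τ^{-α}(C + k|x|² τ^{-2β})^{-1/(1-m)}`. -/
def planarBarenblatt (m C : ℝ) (x : EuclideanSpace ℝ (Fin 2)) (τ : ℝ) : ℝ :=
  τ ^ (-(1 / m)) *
    (C + (1 - m) / (4 * m ^ 2) * ‖x‖ ^ 2 * τ ^ (-(2 * (1 / (2 * m))))) ^ (-(1 / (1 - m)))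

namespace PlanarBarenblattAux

open Metric

local notation "E2" => EuclideanSpace ℝ (Fin 2)

/-! ### One-dimensional radial integrals -/

lemma antideriv_aux {Cc a p : ℝ} (hC : 0 < Cc) (ha : 0 < a) (hp : 1 < p) (r : ℝ) :
    HasDerivAt (fun r : ℝ => (Cc + a * r ^ 2) ^ (1 - p) / (2 * a * (1 - p)))
      (r * (Cc + a * r ^ 2) ^ (-p)) r := by
  have hbase : 0 < Cc + a * r ^ 2 := by positivity
  have h1 : HasDerivAt (fun r : ℝ => Cc + a * r ^ 2) (2 * a * r) r := by
    simpa [mul_comm, mul_assoc, mul_left_comm] using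
      ((hasDerivAt_pow 2 r).const_mul a).const_add Cc
  have h2 := (h1.rpow_const (p := 1 - p) (Or.inl hbase.ne')).div_const (2 * a * (1 - p))
  have hexp : (1:ℝ) - p - 1 = -p := by ring
  rw [hexp] at h2
  convert h2 using 1
  · rfl
  · rfl
  have hne : (1:ℝ) - p ≠ 0 := by linarith
  rw [eq_div_iff (mul_ne_zero (by positivity) hne)]
  ring

lemma oneD_Ioi {Cc a p : ℝ} (hC : 0 < Cc) (ha : 0 < a) (hp : 1 < p) :
    IntegrableOn (fun r : ℝ => r * (Cc + a * r ^ 2) ^ (-p)) (Ioi 0) ∧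
      ∫ r in Ioi (0:ℝ), r * (Cc + a * r ^ 2) ^ (-p) = Cc ^ (1 - p) / (2 * a * (p - 1)) := by
  have hderiv : ∀ r ∈ Ici (0:ℝ), HasDerivAt
      (fun r : ℝ => (Cc + a * r ^ 2) ^ (1 - p) / (2 * a * (1 - p)))
      (r * (Cc + a * r ^ 2) ^ (-p)) r := fun r _ => antideriv_aux hC ha hp r
  have hpos : ∀ r ∈ Ioi (0:ℝ), 0 ≤ r * (Cc + a * r ^ 2) ^ (-p) := by
    intro r hr
    have hr' : (0:ℝ) < r := hr
    have hb : (0:ℝ) < Cc + a * r ^ 2 := by positivity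
    positivity
  have htends : Tendsto (fun r : ℝ => (Cc + a * r ^ 2) ^ (1 - p) / (2 * a * (1 - p)))
      atTop (𝓝 0) := by
    have h1 : Tendsto (fun r : ℝ => Cc + a * r ^ 2) atTop atTop := by
      apply tendsto_atTop_add_const_left
      exact (tendsto_pow_atTop (by norm_num)).const_mul_atTop ha
    have h2 : Tendsto (fun x : ℝ => x ^ (1 - p)) atTop (𝓝 0) := by
      simpa using tendsto_rpow_neg_atTop (by linarith : 0 < p - 1)
    have := (h2.comp h1).div_const (2 * a * (1 - p))
    simpa [Function.comp_def] using this
  refine ⟨integrableOn_Ioi_deriv_of_nonneg' hderiv hpos htends, ?_⟩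
  rw [integral_Ioi_of_hasDerivAt_of_nonneg' hderiv hpos htends]
  have h0 : Cc + a * 0 ^ 2 = Cc := by norm_num
  rw [h0, zero_sub, show 2*a*(1-p) = -(2*a*(p-1)) by ring, div_neg, neg_neg]

lemma cont_aux {Cc a p : ℝ} (hC : 0 < Cc) (ha : 0 < a) :
    Continuous (fun r : ℝ => r * (Cc + a * r ^ 2) ^ (-p)) := by
  apply continuous_id.mul
  apply Continuous.rpow_const
  · continuity
  · intro r
    have : (0:ℝ) < Cc + a * r ^ 2 := by positivity
    exact Or.inl this.ne'

lemma oneD_Ioo {Cc a p : ℝ} (hC : 0 < Cc) (ha : 0 < a) (hp : 1 < p) {δ : ℝ} (hδ : 0 < δ) :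
    ∫ r in Ioo (0:ℝ) δ, r * (Cc + a * r ^ 2) ^ (-p)
      = (Cc ^ (1 - p) - (Cc + a * δ ^ 2) ^ (1 - p)) / (2 * a * (p - 1)) := by
  rw [← integral_Ioc_eq_integral_Ioo, ← intervalIntegral.integral_of_le hδ.le]
  rw [intervalIntegral.integral_eq_sub_of_hasDerivAt
    (fun r _ => antideriv_aux hC ha hp r) ((cont_aux hC ha).intervalIntegrable 0 δ)]
  have h0 : Cc + a * 0 ^ 2 = Cc := by norm_num
  rw [h0, div_sub_div_same, show 2*a*(1-p) = -(2*a*(p-1)) by ring, div_neg, ← neg_div, neg_sub]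

/-! ### Two-dimensional radial integrals -/

lemma radial2D (g : ℝ → ℝ) :
    ∫ x : E2, g ‖x‖ = 2 * π * ∫ r in Ioi (0:ℝ), r * g r := by
  rw [integral_fun_norm_addHaar (volume : Measure E2) g]
  have hd : Module.finrank ℝ E2 = 2 := finrank_euclideanSpace_fin
  rw [hd]
  have hvol : (volume (ball (0:E2) 1)).toReal = π := by
    rw [EuclideanSpace.volume_ball]
    norm_num [Real.Gamma_two]
    rw [show √π ^ 2 = π from sq_sqrt Real.pi_nonneg]
  rw [measureReal_def, hvol]
  simp only [nsmul_eq_mul, smul_eq_mul, Nat.cast_ofNat]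
  norm_num
  ring

lemma cont2D {Cc a p : ℝ} (hC : 0 < Cc) (ha : 0 < a) :
    Continuous (fun x : E2 => (Cc + a * ‖x‖ ^ 2) ^ (-p)) := by
  apply Continuous.rpow_const
  · continuity
  · exact fun x => Or.inl (by positivity : (0:ℝ) < Cc + a * ‖x‖ ^ 2).ne'

lemma integrable2D {Cc a p : ℝ} (hC : 0 < Cc) (ha : 0 < a) (hp : 1 < p) :
    Integrable (fun x : E2 => (Cc + a * ‖x‖ ^ 2) ^ (-p)) := by
  set c : ℝ := min Cc a / 2 with hc
  have hcpos : 0 < c := by positivity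
  have hbound : ∀ x : E2, ‖(Cc + a * ‖x‖ ^ 2) ^ (-p)‖ ≤ c ^ (-p) * (1 + ‖x‖) ^ (-(2*p)) := by
    intro x
    have hb : (0:ℝ) < Cc + a * ‖x‖ ^ 2 := by positivity
    have h1 : c * (1 + ‖x‖) ^ 2 ≤ Cc + a * ‖x‖ ^ 2 := by
      have h2 : (1 + ‖x‖) ^ 2 ≤ 2 * (1 + ‖x‖ ^ 2) := by nlinarith [sq_nonneg (1 - ‖x‖)]
      have h3 : min Cc a ≤ Cc := min_le_left _ _
      have h4 : min Cc a ≤ a := min_le_right _ _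
      nlinarith [norm_nonneg x, sq_nonneg (‖x‖), hcpos.le]
    have h5 : (0:ℝ) < 1 + ‖x‖ := by positivity
    have h6 : (Cc + a * ‖x‖ ^ 2) ^ (-p) ≤ (c * (1 + ‖x‖) ^ 2) ^ (-p) := by
      apply Real.rpow_le_rpow_of_nonpos (by positivity) h1 (by linarith)
    rw [norm_of_nonneg (Real.rpow_nonneg hb.le _)]
    refine h6.trans (le_of_eq ?_)
    rw [Real.mul_rpow hcpos.le (by positivity), ← Real.rpow_natCast (1 + ‖x‖) 2,
      ← Real.rpow_mul h5.le]
    norm_num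
  have hint : Integrable (fun x : E2 => c ^ (-p) * (1 + ‖x‖) ^ (-(2*p))) := by
    apply Integrable.const_mul
    apply integrable_one_add_norm (E := E2)
    rw [finrank_euclideanSpace_fin]
    norm_num; linarith
  exact hint.mono' (cont2D hC ha).aestronglyMeasurable
    (Filter.Eventually.of_forall hbound)

lemma full2D {Cc a p : ℝ} (hC : 0 < Cc) (ha : 0 < a) (hp : 1 < p) :
    ∫ x : E2, (Cc + a * ‖x‖ ^ 2) ^ (-p) = π / (a * (p - 1)) * Cc ^ (1 - p) := by
  have := radial2D (fun r => (Cc + a * r ^ 2) ^ (-p))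
  rw [this, (oneD_Ioi hC ha hp).2]
  have ha' : a ≠ 0 := ha.ne'
  have hp' : p - 1 ≠ 0 := by linarith
  field_simp

lemma ball2D {Cc a p : ℝ} (hC : 0 < Cc) (ha : 0 < a) (hp : 1 < p) {δ : ℝ} (hδ : 0 < δ) :
    ∫ x in ball (0:E2) δ, (Cc + a * ‖x‖ ^ 2) ^ (-p)
      = π / (a * (p - 1)) * (Cc ^ (1 - p) - (Cc + a * δ ^ 2) ^ (1 - p)) := by
  have key : ∫ x : E2, (Iio δ).indicator (fun r => (Cc + a * r ^ 2) ^ (-p)) ‖x‖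
      = 2 * π * ∫ r in Ioi (0:ℝ), r * (Iio δ).indicator (fun r => (Cc + a * r ^ 2) ^ (-p)) r :=
    radial2D _
  have lhs_eq : ∫ x : E2, (Iio δ).indicator (fun r => (Cc + a * r ^ 2) ^ (-p)) ‖x‖
      = ∫ x in ball (0:E2) δ, (Cc + a * ‖x‖ ^ 2) ^ (-p) := by
    rw [← integral_indicator measurableSet_ball]
    congr 1
    ext x
    by_cases h : ‖x‖ < δ <;>
      simp [Set.indicator_apply, h, mem_ball_zero_iff]
  have rhs_eq : ∫ r in Ioi (0:ℝ), r * (Iio δ).indicator (fun r => (Cc + a * r ^ 2) ^ (-p)) r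
      = ∫ r in Ioo (0:ℝ) δ, r * (Cc + a * r ^ 2) ^ (-p) := by
    have : ∀ r : ℝ, r * (Iio δ).indicator (fun r => (Cc + a * r ^ 2) ^ (-p)) r
        = (Iio δ).indicator (fun r => r * (Cc + a * r ^ 2) ^ (-p)) r := by
      intro r
      by_cases h : r < δ <;> simp [Set.indicator_apply, h]
    simp_rw [this]
    rw [integral_indicator measurableSet_Iio, Measure.restrict_restrict measurableSet_Iio,
      Set.Iio_inter_Ioi]
  rw [lhs_eq, rhs_eq, oneD_Ioo hC ha hp hδ] at key
  rw [key]
  have ha' : a ≠ 0 := ha.ne'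
  have hp' : p - 1 ≠ 0 := by linarith
  field_simp

/-! ### Rescaled Barenblatt profiles -/

def SS (m t : ℝ) : ℝ := (t / m) ^ (-(1 / m))
def kk (m : ℝ) : ℝ := (1 - m) / (4 * m ^ 2)

variable {m t : ℝ}

lemma hp_one (hm : 0 < m) (hm1 : m < 1) : 1 < 1 / (1 - m) := by
  rw [lt_div_iff₀ (by linarith)]; linarith

lemma SS_pos (hm : 0 < m) (ht : 0 < t) : 0 < SS m t :=
  Real.rpow_pos_of_pos (by positivity) _

lemma kk_pos (hm : 0 < m) (hm1 : m < 1) : 0 < kk m := by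
  unfold kk
  apply div_pos (by linarith) (by positivity)

lemma barenblatt_eval (hm : 0 < m) (Cv : ℝ) (x : E2) :
    planarBarenblatt m Cv x (t / m)
      = SS m t * (Cv + kk m * SS m t * ‖x‖ ^ 2) ^ (-(1 / (1 - m))) := by
  unfold planarBarenblatt SS kk
  rw [show -(2 * (1 / (2 * m))) = -(1 / m) by field_simp]
  rw [mul_right_comm]

lemma mass_const (hm : 0 < m) (hm1 : m < 1) {Cv M : ℝ} (hC : 0 < Cv)
    (h : ∫ x, planarBarenblatt m Cv x 1 = M) :
    4 * π * m * Cv ^ (-(m / (1 - m))) = M := by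
  have h1m : (0:ℝ) < 1 - m := by linarith
  have heval : ∀ x : E2, planarBarenblatt m Cv x 1
      = (Cv + kk m * ‖x‖ ^ 2) ^ (-(1 / (1 - m))) := by
    intro x
    unfold planarBarenblatt kk
    rw [Real.one_rpow, Real.one_rpow, one_mul, mul_one]
  rw [funext heval] at h
  rw [full2D hC (kk_pos hm hm1) (hp_one hm hm1)] at h
  rw [← h]
  have e1 : kk m * (1 / (1 - m) - 1) = 1 / (4 * m) := by
    unfold kk; field_simp; ring
  have e2 : 1 - 1 / (1 - m) = -(m / (1 - m)) := by field_simp; ring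
  rw [e1, e2, show π / (1 / (4 * m)) = 4 * π * m by field_simp]

lemma g_pos {Cv : ℝ} (hm : 0 < m) (hm1 : m < 1) (ht : 0 < t) (hC : 0 < Cv) (x : E2) :
    0 < planarBarenblatt m Cv x (t / m) := by
  rw [barenblatt_eval hm]
  have hS := SS_pos hm ht
  have hk := kk_pos hm hm1
  have hbase : 0 < Cv + kk m * SS m t * ‖x‖ ^ 2 := by positivity
  positivity

lemma integrable_g {Cv : ℝ} (hm : 0 < m) (hm1 : m < 1) (ht : 0 < t) (hC : 0 < Cv) :
    Integrable (fun x : E2 => planarBarenblatt m Cv x (t / m)) := by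
  have heq : (fun x : E2 => planarBarenblatt m Cv x (t / m))
      = fun x : E2 => SS m t * (Cv + kk m * SS m t * ‖x‖ ^ 2) ^ (-(1 / (1 - m))) := by
    funext x; exact barenblatt_eval hm Cv x
  rw [heq]
  exact (integrable2D hC (mul_pos (kk_pos hm hm1) (SS_pos hm ht)) (hp_one hm hm1)).const_mul _

lemma massIn {Cv M δ : ℝ} (hm : 0 < m) (hm1 : m < 1) (ht : 0 < t) (hC : 0 < Cv) (hδ : 0 < δ)
    (h : 4 * π * m * Cv ^ (-(m / (1 - m))) = M) :
    ∫ x in ball (0:E2) δ, planarBarenblatt m Cv x (t / m)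
      = M - 4 * π * m * (Cv + kk m * SS m t * δ ^ 2) ^ (-(m / (1 - m))) := by
  have hS := SS_pos hm ht
  have hk := kk_pos hm hm1
  have h1m : (0:ℝ) < 1 - m := by linarith
  have ha := mul_pos hk hS
  have hcalc : ∫ x in ball (0:E2) δ, planarBarenblatt m Cv x (t / m)
      = SS m t * ∫ x in ball (0:E2) δ, (Cv + kk m * SS m t * ‖x‖ ^ 2) ^ (-(1 / (1 - m))) := by
    rw [← integral_const_mul]
    apply setIntegral_congr_fun measurableSet_ball
    intro x _
    exact barenblatt_eval hm Cv x
  rw [hcalc, ball2D hC ha (hp_one hm hm1) hδ]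
  have e1 : kk m * (1 / (1 - m) - 1) = 1 / (4 * m) := by
    unfold kk; field_simp; ring
  have e2 : 1 - 1 / (1 - m) = -(m / (1 - m)) := by field_simp; ring
  have key : SS m t * (π / (kk m * SS m t * (1 / (1 - m) - 1))) = 4 * π * m := by
    rw [show kk m * SS m t * (1 / (1 - m) - 1) = SS m t * (kk m * (1 / (1 - m) - 1)) by ring,
      e1]
    field_simp
  calc SS m t * (π / (kk m * SS m t * (1 / (1 - m) - 1))
        * (Cv ^ (1 - 1/(1-m)) - (Cv + kk m * SS m t * δ ^ 2) ^ (1 - 1/(1-m))))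
      = (SS m t * (π / (kk m * SS m t * (1 / (1 - m) - 1))))
        * (Cv ^ (1 - 1/(1-m)) - (Cv + kk m * SS m t * δ ^ 2) ^ (1 - 1/(1-m))) := by ring
    _ = _ := by rw [key, e2, mul_sub, h]

lemma ident1 (hm : 0 < m) (hm1 : m < 1) (ht : 0 < t) {δ : ℝ} (hδ : 0 < δ) :
    SS m t * (kk m * SS m t * δ ^ 2) ^ (-(1 / (1 - m)))
      = (4 * m * t / ((1 - m) * δ ^ 2)) ^ (1 / (1 - m)) := by
  have h1m : (0:ℝ) < 1 - m := by linarith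
  have hS := SS_pos hm ht
  have hk := kk_pos hm hm1
  have htm : (0:ℝ) < t / m := by positivity
  have hL : 0 < SS m t * (kk m * SS m t * δ ^ 2) ^ (-(1 / (1 - m))) := by positivity
  have hR : (0:ℝ) < (4 * m * t / ((1 - m) * δ ^ 2)) ^ (1 / (1 - m)) := by positivity
  rw [← Real.exp_log hL, ← Real.exp_log hR]
  congr 1
  rw [Real.log_mul hS.ne' (by positivity), Real.log_rpow (by positivity),
    Real.log_rpow (by positivity), Real.log_mul (by positivity) (by positivity : (δ:ℝ)^2 ≠ 0),
    Real.log_mul hk.ne' hS.ne']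
  unfold SS kk
  rw [Real.log_rpow htm, Real.log_div ht.ne' hm.ne',
    Real.log_div (by positivity : (4:ℝ)*m*t ≠ 0) (by positivity : ((1:ℝ)-m)*δ^2 ≠ 0),
    Real.log_div (by positivity : ((1:ℝ)-m) ≠ 0) (by positivity : (4:ℝ)*m^2 ≠ 0),
    Real.log_mul (by positivity : ((1:ℝ)-m) ≠ 0) (by positivity : (δ:ℝ)^2 ≠ 0),
    Real.log_mul (by positivity : (4:ℝ)*m ≠ 0) ht.ne',
    Real.log_mul (by norm_num : (4:ℝ) ≠ 0) hm.ne',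
    Real.log_mul (by norm_num : (4:ℝ) ≠ 0) (by positivity : (m:ℝ)^2 ≠ 0),
    Real.log_pow, Real.log_pow]
  field_simp
  ring

lemma ident2 (hm : 0 < m) (hm1 : m < 1) (ht : 0 < t) {δ : ℝ} (hδ : 0 < δ) :
    4 * π * m * (kk m * SS m t * δ ^ 2) ^ (-(m / (1 - m)))
      = 4 * π * (t ^ (1 / (1 - m)) * ((1 - m) * δ ^ 2 / 4) ^ (-(m / (1 - m)))
          * m ^ (m / (1 - m))) := by
  have h1m : (0:ℝ) < 1 - m := by linarith
  have hS := SS_pos hm ht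
  have hk := kk_pos hm hm1
  have htm : (0:ℝ) < t / m := by positivity
  have h4π : (0:ℝ) < 4 * π := by positivity
  rw [mul_assoc (4*π) m _]
  congr 1
  have hL : (0:ℝ) < m * (kk m * SS m t * δ ^ 2) ^ (-(m / (1 - m))) := by positivity
  have hR : (0:ℝ) < t ^ (1 / (1 - m)) * ((1 - m) * δ ^ 2 / 4) ^ (-(m / (1 - m)))
      * m ^ (m / (1 - m)) := by positivity
  rw [← Real.exp_log hL, ← Real.exp_log hR]
  congr 1
  rw [Real.log_mul hm.ne' (by positivity), Real.log_rpow (by positivity),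
    Real.log_mul
      (by positivity : t ^ (1/(1-m)) * ((1-m)*δ^2/4) ^ (-(m/(1-m))) ≠ 0)
      (by positivity : (m:ℝ) ^ (m/(1-m)) ≠ 0),
    Real.log_mul (by positivity : (t:ℝ) ^ (1/(1-m)) ≠ 0)
      (by positivity : (((1:ℝ)-m)*δ^2/4) ^ (-(m/(1-m))) ≠ 0),
    Real.log_rpow ht, Real.log_rpow (by positivity : (0:ℝ) < (1-m)*δ^2/4), Real.log_rpow hm,
    Real.log_mul (by positivity : kk m * SS m t ≠ 0) (by positivity : (δ:ℝ)^2 ≠ 0),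
    Real.log_mul hk.ne' hS.ne']
  unfold SS kk
  rw [Real.log_rpow htm, Real.log_div ht.ne' hm.ne',
    Real.log_div (by positivity : ((1:ℝ)-m) ≠ 0) (by positivity : (4:ℝ)*m^2 ≠ 0),
    Real.log_div (by positivity : ((1:ℝ)-m)*δ^2 ≠ 0) (by norm_num : (4:ℝ) ≠ 0),
    Real.log_mul (by positivity : ((1:ℝ)-m) ≠ 0) (by positivity : (δ:ℝ)^2 ≠ 0),
    Real.log_mul (by norm_num : (4:ℝ) ≠ 0) (by positivity : (m:ℝ)^2 ≠ 0),
    Real.log_pow, Real.log_pow]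
  field_simp
  ring

lemma tendsto_q : Tendsto (fun m : ℝ => m / (1 - m)) (𝓝[>] 0) (𝓝 0) := by
  have h : Tendsto (fun m : ℝ => m / (1 - m)) (𝓝 0) (𝓝 (0 / (1 - 0))) :=
    tendsto_id.div (tendsto_const_nhds.sub tendsto_id) (by norm_num)
  simpa using h.mono_left nhdsWithin_le_nhds

lemma tendsto_inv_one_sub : Tendsto (fun m : ℝ => 1 / (1 - m)) (𝓝[>] 0) (𝓝 1) := by
  have h : Tendsto (fun m : ℝ => 1 / (1 - m)) (𝓝 0) (𝓝 (1 / (1 - 0))) :=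
    tendsto_const_nhds.div (tendsto_const_nhds.sub tendsto_id) (by norm_num)
  simpa using h.mono_left nhdsWithin_le_nhds

lemma tendsto_mq : Tendsto (fun m : ℝ => m ^ (m / (1 - m))) (𝓝[>] 0) (𝓝 1) := by
  have h1 : Tendsto (fun m : ℝ => log m * m) (𝓝[>] 0) (𝓝 0) := by
    simpa [Real.rpow_one] using tendsto_log_mul_rpow_nhdsGT_zero one_pos
  have h2 : Tendsto (fun m : ℝ => (1 - m)⁻¹) (𝓝[>] 0) (𝓝 1) := by
    simpa using tendsto_inv_one_sub.congr (fun m => by rw [one_div])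
  have h3 : Tendsto (fun m : ℝ => log m * m * (1 - m)⁻¹) (𝓝[>] 0) (𝓝 0) := by
    simpa using h1.mul h2
  have h4 : Tendsto (fun m : ℝ => Real.exp (log m * m * (1 - m)⁻¹)) (𝓝[>] 0) (𝓝 1) := by
    simpa [Function.comp_def] using (Real.continuous_exp.tendsto 0).comp h3
  apply h4.congr'
  filter_upwards [self_mem_nhdsWithin] with m hm
  rw [Real.rpow_def_of_pos hm]
  congr 1
  rw [div_eq_mul_inv]
  ring

lemma tendsto_D {t δ : ℝ} (ht : 0 < t) (hδ : 0 < δ) :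
    Tendsto (fun m => 4 * π * m * (kk m * SS m t * δ ^ 2) ^ (-(m / (1 - m)))) (𝓝[>] 0)
      (𝓝 (4 * π * t)) := by
  have hT : Tendsto (fun m : ℝ => t ^ (1 / (1 - m))) (𝓝[>] 0) (𝓝 t) := by
    simpa using Filter.Tendsto.rpow (tendsto_const_nhds (x := t)) tendsto_inv_one_sub
      (Or.inl ht.ne')
  have hA : Tendsto (fun m : ℝ => ((1 - m) * δ ^ 2 / 4) ^ (-(m / (1 - m)))) (𝓝[>] 0)
      (𝓝 1) := by
    have hbase : Tendsto (fun m : ℝ => (1 - m) * δ ^ 2 / 4) (𝓝[>] 0) (𝓝 (δ ^ 2 / 4)) := by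
      have : Tendsto (fun m : ℝ => (1 - m) * δ ^ 2 / 4) (𝓝 0) (𝓝 ((1 - 0) * δ ^ 2 / 4)) := by
        apply Tendsto.div_const; exact (tendsto_const_nhds.sub tendsto_id).mul tendsto_const_nhds
      simpa using this.mono_left nhdsWithin_le_nhds
    simpa using Filter.Tendsto.rpow hbase tendsto_q.neg (Or.inl (by positivity : (δ:ℝ)^2/4 ≠ 0))
  have hfull : Tendsto (fun m : ℝ => 4 * π * (t ^ (1 / (1 - m)) * ((1 - m) * δ ^ 2 / 4)
      ^ (-(m / (1 - m))) * m ^ (m / (1 - m)))) (𝓝[>] 0) (𝓝 (4 * π * t)) := by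
    have := ((hT.mul hA).mul tendsto_mq).const_mul (4 * π)
    simpa [mul_assoc] using this
  apply hfull.congr'
  filter_upwards [Ioo_mem_nhdsGT_of_mem (by constructor <;> norm_num : (0:ℝ) ∈ Ico 0 1)]
    with m hm
  exact (ident2 hm.1 hm.2 ht hδ).symm

lemma tendsto_E {t δ : ℝ} (ht : 0 < t) (hδ : 0 < δ) :
    Tendsto (fun m => (4 * m * t / ((1 - m) * δ ^ 2)) ^ (1 / (1 - m))) (𝓝[>] 0) (𝓝 0) := by
  have hb : Tendsto (fun m : ℝ => 4 * m * t / ((1 - m) * δ ^ 2)) (𝓝[>] 0) (𝓝 0) := by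
    have : Tendsto (fun m : ℝ => 4 * m * t / ((1 - m) * δ ^ 2)) (𝓝 0)
        (𝓝 (4 * 0 * t / ((1 - 0) * δ ^ 2))) := by
      apply Tendsto.div
      · exact (tendsto_const_nhds.mul tendsto_id).mul tendsto_const_nhds
      · exact (tendsto_const_nhds.sub tendsto_id).mul tendsto_const_nhds
      · simpa using by positivity
    simpa using this.mono_left nhdsWithin_le_nhds
  apply squeeze_zero' _ _ hb
  · filter_upwards [Ioo_mem_nhdsGT_of_mem (by constructor <;> norm_num : (0:ℝ) ∈ Ico 0 1)]
      with m hm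
    have : (0:ℝ) < 4 * m * t / ((1 - m) * δ ^ 2) := by
      have h1m : (0:ℝ) < 1 - m := by linarith [hm.2]
      have := hm.1; positivity
    positivity
  · filter_upwards [Ioo_mem_nhdsGT_of_mem (by constructor <;> norm_num : (0:ℝ) ∈ Ico 0 1),
      hb.eventually_lt_const one_pos] with m hm hlt
    have h1m : (0:ℝ) < 1 - m := by linarith [hm.2]
    have hbpos : (0:ℝ) < 4 * m * t / ((1 - m) * δ ^ 2) := by
      have := hm.1; positivity
    calc (4 * m * t / ((1 - m) * δ ^ 2)) ^ (1 / (1 - m))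
        ≤ (4 * m * t / ((1 - m) * δ ^ 2)) ^ (1:ℝ) := by
          apply Real.rpow_le_rpow_of_exponent_ge hbpos hlt.le
          rw [le_div_iff₀ h1m]; linarith [hm.1]
      _ = 4 * m * t / ((1 - m) * δ ^ 2) := Real.rpow_one _

lemma tendsto_W {M t δ : ℝ} (ht : 0 < t) (hδ : 0 < δ) {C : ℝ → ℝ}
    (hCpos : ∀ m ∈ Ioo (0:ℝ) 1, 0 < C m)
    (hCM : ∀ m ∈ Ioo (0:ℝ) 1, 4 * π * m * (C m) ^ (-(m / (1 - m))) = M) :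
    Tendsto (fun m => 4 * π * m * (C m + kk m * SS m t * δ ^ 2) ^ (-(m / (1 - m))))
      (𝓝[>] 0) (𝓝 (min M (4 * π * t))) := by
  have hmem : Ioo (0:ℝ) 1 ∈ 𝓝[>] (0:ℝ) :=
    Ioo_mem_nhdsGT_of_mem (by constructor <;> norm_num)
  have hlower : Tendsto (fun m : ℝ => (2:ℝ) ^ (-(m / (1 - m)))
      * min M (4 * π * m * (kk m * SS m t * δ ^ 2) ^ (-(m / (1 - m))))) (𝓝[>] 0)
      (𝓝 (min M (4 * π * t))) := by
    have h2 : Tendsto (fun m : ℝ => (2:ℝ) ^ (-(m / (1 - m)))) (𝓝[>] 0) (𝓝 1) := by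
      simpa using Filter.Tendsto.rpow (tendsto_const_nhds (x := (2:ℝ))) tendsto_q.neg
        (Or.inl two_ne_zero)
    have hmin : Tendsto (fun m : ℝ => min M (4 * π * m * (kk m * SS m t * δ ^ 2)
        ^ (-(m / (1 - m))))) (𝓝[>] 0) (𝓝 (min M (4 * π * t))) :=
      tendsto_const_nhds.min (tendsto_D ht hδ)
    simpa using h2.mul hmin
  have hupper : Tendsto (fun m : ℝ => min M (4 * π * m * (kk m * SS m t * δ ^ 2)
      ^ (-(m / (1 - m))))) (𝓝[>] 0) (𝓝 (min M (4 * π * t))) :=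
    tendsto_const_nhds.min (tendsto_D ht hδ)
  apply tendsto_of_tendsto_of_tendsto_of_le_of_le' hlower hupper
  · filter_upwards [hmem] with m hm
    have h1m : (0:ℝ) < 1 - m := by linarith [hm.2]
    have hm0 := hm.1
    have hq : (0:ℝ) ≤ m / (1 - m) := by positivity
    have hqn : -(m / (1 - m)) ≤ 0 := by linarith
    have hCm := hCpos m hm
    have hB : (0:ℝ) < kk m * SS m t * δ ^ 2 :=
      mul_pos (mul_pos (kk_pos hm0 hm.2) (SS_pos hm0 ht)) (by positivity)
    set B := kk m * SS m t * δ ^ 2 with hBdef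
    set q := m / (1 - m) with hqdef
    have hc : (0:ℝ) ≤ 4 * π * m := by positivity
    have hmaxpos : 0 < max (C m) B := lt_max_of_lt_left hCm
    have hminmax : min ((C m) ^ (-q)) (B ^ (-q)) = (max (C m) B) ^ (-q) := by
      rcases le_total (C m) B with h | h
      · rw [max_eq_right h, min_eq_right (Real.rpow_le_rpow_of_nonpos hCm h hqn)]
      · rw [max_eq_left h, min_eq_left (Real.rpow_le_rpow_of_nonpos hB h hqn)]
    have hle : C m + B ≤ 2 * max (C m) B := by
      rcases le_total (C m) B with h | h
      · rw [max_eq_right h]; linarith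
      · rw [max_eq_left h]; linarith
    have h2max : (2 * max (C m) B) ^ (-q) ≤ (C m + B) ^ (-q) :=
      Real.rpow_le_rpow_of_nonpos (by positivity) hle hqn
    have hrw : min M (4 * π * m * B ^ (-q)) = 4 * π * m * (max (C m) B) ^ (-q) := by
      rw [← hCM m hm, ← mul_min_of_nonneg _ _ hc, hminmax]
    rw [hrw]
    calc (2:ℝ) ^ (-q) * (4 * π * m * (max (C m) B) ^ (-q))
        = 4 * π * m * ((2:ℝ) ^ (-q) * (max (C m) B) ^ (-q)) := by ring
      _ = 4 * π * m * ((2 * max (C m) B) ^ (-q)) := by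
          rw [← Real.mul_rpow (by norm_num) hmaxpos.le]
      _ ≤ 4 * π * m * (C m + B) ^ (-q) := mul_le_mul_of_nonneg_left h2max hc
  · filter_upwards [hmem] with m hm
    have h1m : (0:ℝ) < 1 - m := by linarith [hm.2]
    have hm0 := hm.1
    have hq : (0:ℝ) ≤ m / (1 - m) := by positivity
    have hqn : -(m / (1 - m)) ≤ 0 := by linarith
    have hCm := hCpos m hm
    have hB : (0:ℝ) < kk m * SS m t * δ ^ 2 :=
      mul_pos (mul_pos (kk_pos hm0 hm.2) (SS_pos hm0 ht)) (by positivity)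
    have hc : (0:ℝ) ≤ 4 * π * m := by positivity
    apply le_min
    · rw [← hCM m hm]
      exact mul_le_mul_of_nonneg_left
        (Real.rpow_le_rpow_of_nonpos hCm (by linarith) hqn) hc
    · exact mul_le_mul_of_nonneg_left
        (Real.rpow_le_rpow_of_nonpos hB (by linarith) hqn) hc

lemma g_le {Cv δ : ℝ} (hm : 0 < m) (hm1 : m < 1) (ht : 0 < t) (hC : 0 < Cv) (hδ : 0 < δ)
    {x : E2} (hx : δ ≤ ‖x‖) :
    planarBarenblatt m Cv x (t / m) ≤ (4 * m * t / ((1 - m) * δ ^ 2)) ^ (1 / (1 - m)) := by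
  have hS := SS_pos hm ht
  have hk := kk_pos hm hm1
  have h1m : (0:ℝ) < 1 - m := by linarith
  rw [barenblatt_eval hm, ← ident1 hm hm1 ht hδ]
  apply mul_le_mul_of_nonneg_left _ hS.le
  apply Real.rpow_le_rpow_of_nonpos (by positivity)
  · have h2 : kk m * SS m t * δ ^ 2 ≤ kk m * SS m t * ‖x‖ ^ 2 :=
      mul_le_mul_of_nonneg_left (pow_le_pow_left₀ hδ.le hx 2) (by positivity)
    linarith
  · have hpos : (0:ℝ) < 1 / (1 - m) := by positivity
    linarith

end PlanarBarenblattAux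

open PlanarBarenblattAux Metric

/-- Concentration plus extinction in the planar limit `m → 0⁺`: if the
Barenblatt solutions `B_m` on `ℝ²` have mass `M`, then the rescaled solutions
`B̃_m(x,t) = B_m(x,t/m)` of `∂_t u = div(u^{m-1}∇u)` converge, as `m → 0⁺`, to
`0` pointwise away from the origin and, vaguely (against continuous compactly
supported functions), to the measure `(M - 4πt)₊ δ₀`. -/
theorem planar_barenblatt_limit_m_zero
    (M t : ℝ) (hM : 0 < M) (ht : 0 < t)
    (C : ℝ → ℝ) (hCpos : ∀ m, 0 < m → m < 1 → 0 < C m)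
    (hmass : ∀ m, 0 < m → m < 1 → ∀ τ : ℝ, 0 < τ →
      ∫ x, planarBarenblatt m (C m) x τ = M) :
    (∀ x : EuclideanSpace ℝ (Fin 2), x ≠ 0 →
      Tendsto (fun m => planarBarenblatt m (C m) x (t / m)) (𝓝[>] 0) (𝓝 0)) ∧
    (∀ f : EuclideanSpace ℝ (Fin 2) → ℝ, Continuous f → HasCompactSupport f →
      Tendsto (fun m => ∫ x, f x * planarBarenblatt m (C m) x (t / m))
        (𝓝[>] 0) (𝓝 (max (M - 4 * π * t) 0 * f 0))) := by
  have hmem : Ioo (0:ℝ) 1 ∈ 𝓝[>] (0:ℝ) :=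
    Ioo_mem_nhdsGT_of_mem (by constructor <;> norm_num)
  have hCM : ∀ m ∈ Ioo (0:ℝ) 1, 4 * π * m * (C m) ^ (-(m / (1 - m))) = M := fun m hm =>
    mass_const hm.1 hm.2 (hCpos m hm.1 hm.2) (hmass m hm.1 hm.2 1 one_pos)
  constructor
  · -- pointwise extinction away from the origin
    intro x hx
    have hδ : (0:ℝ) < ‖x‖ := norm_pos_iff.mpr hx
    apply squeeze_zero' ?_ ?_ (tendsto_E ht hδ)
    · filter_upwards [hmem] with m hm
      exact (g_pos hm.1 hm.2 ht (hCpos m hm.1 hm.2) x).le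
    · filter_upwards [hmem] with m hm
      exact g_le hm.1 hm.2 ht (hCpos m hm.1 hm.2) hδ le_rfl
  · -- vague convergence to (M - 4πt)₊ δ₀
    intro f hf hsupp
    set L := max (M - 4 * π * t) 0 with hLdef
    have hfInt : Integrable f := hf.integrable_of_hasCompactSupport hsupp
    have hIf : (0:ℝ) ≤ ∫ x, ‖f x‖ := integral_nonneg fun x => norm_nonneg _
    rw [show max (M - 4 * π * t) 0 * f 0 = L * f 0 by rw [hLdef], Metric.tendsto_nhds]
    intro ε hε
    set ε₁ := ε / (3 * (M + 1)) with hε₁def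
    have hε₁ : 0 < ε₁ := by positivity
    obtain ⟨δ₀, hδ₀pos, hδ₀⟩ := Metric.continuous_iff.mp hf 0 ε₁ hε₁
    -- mass inside the ball of radius δ₀ tends to L
    have hWlim := tendsto_W ht hδ₀pos (fun m hm => hCpos m hm.1 hm.2) hCM
    have hIinlim : Tendsto
        (fun m => ∫ x in ball (0 : EuclideanSpace ℝ (Fin 2)) δ₀, planarBarenblatt m (C m) x (t / m))
        (𝓝[>] 0) (𝓝 L) := by
      have hsub : Tendsto (fun m => M - 4 * π * m * (C m + kk m * SS m t * δ₀ ^ 2)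
          ^ (-(m / (1 - m)))) (𝓝[>] 0) (𝓝 (M - min M (4 * π * t))) :=
        tendsto_const_nhds.sub hWlim
      have hLeq : M - min M (4 * π * t) = L := by
        rw [hLdef]
        rcases le_total M (4 * π * t) with h | h
        · rw [min_eq_left h, sub_self, max_eq_right (by linarith)]
        · rw [min_eq_right h, max_eq_left (by linarith)]
      rw [hLeq] at hsub
      apply hsub.congr'
      filter_upwards [hmem] with m hm
      exact (massIn hm.1 hm.2 ht (hCpos m hm.1 hm.2) hδ₀pos (hCM m hm)).symm
    have hIinev : ∀ᶠ m in 𝓝[>] (0:ℝ),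
        dist (∫ x in ball (0 : EuclideanSpace ℝ (Fin 2)) δ₀, planarBarenblatt m (C m) x (t / m)) L
          < ε / (3 * (|f 0| + 1)) :=
      Metric.tendsto_nhds.mp hIinlim _ (by positivity)
    have hEev : ∀ᶠ m in 𝓝[>] (0:ℝ),
        (4 * m * t / ((1 - m) * δ₀ ^ 2)) ^ (1 / (1 - m)) < ε / (3 * ((∫ x, ‖f x‖) + 1)) :=
      (tendsto_E ht hδ₀pos).eventually_lt_const (by positivity)
    filter_upwards [hmem, hIinev, hEev] with m hm hIin hE
    have hm0 := hm.1
    have hm1 := hm.2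
    have h1m : (0:ℝ) < 1 - m := by linarith
    have hCmpos := hCpos m hm0 hm1
    set g : EuclideanSpace ℝ (Fin 2) → ℝ := fun x => planarBarenblatt m (C m) x (t / m) with hgdef
    have hgpos : ∀ x, 0 < g x := fun x => g_pos hm0 hm1 ht hCmpos x
    have hgInt : Integrable g := integrable_g hm0 hm1 ht hCmpos
    have hfgInt : Integrable (fun x => f x * g x) :=
      hgInt.bdd_mul hf.aestronglyMeasurable (ae_of_all _ (hsupp.exists_bound_of_continuous hf).choose_spec)
    have htot : ∫ x, g x = M := hmass m hm0 hm1 (t / m) (by positivity)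
    set Iin := ∫ x in ball (0 : EuclideanSpace ℝ (Fin 2)) δ₀, g x with hIindef
    have hIinM : Iin ≤ M := by
      rw [hIindef, ← htot]
      exact setIntegral_le_integral hgInt (Filter.Eventually.of_forall fun x => (hgpos x).le)
    set Em := (4 * m * t / ((1 - m) * δ₀ ^ 2)) ^ (1 / (1 - m)) with hEmdef
    have hEmpos : 0 ≤ Em := Real.rpow_nonneg (by positivity) _
    -- splitting of the integral
    have hsplit : ∫ x, f x * g x
        = (∫ x in ball (0 : EuclideanSpace ℝ (Fin 2)) δ₀, (f x - f 0) * g x)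
          + f 0 * Iin
          + ∫ x in (ball (0 : EuclideanSpace ℝ (Fin 2)) δ₀)ᶜ, f x * g x := by
      have h1 : (∫ x in ball (0 : EuclideanSpace ℝ (Fin 2)) δ₀, f x * g x)
          + ∫ x in (ball (0 : EuclideanSpace ℝ (Fin 2)) δ₀)ᶜ, f x * g x = ∫ x, f x * g x :=
        integral_add_compl measurableSet_ball hfgInt
      have h2 : ∫ x in ball (0 : EuclideanSpace ℝ (Fin 2)) δ₀, (f x - f 0) * g x
          = (∫ x in ball (0 : EuclideanSpace ℝ (Fin 2)) δ₀, f x * g x) - f 0 * Iin := by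
        rw [hIindef, ← integral_const_mul, ← integral_sub hfgInt.integrableOn
          (hgInt.integrableOn.const_mul (f 0))]
        congr 1
        funext x
        ring
      linarith
    -- first error term
    have hT1 : |∫ x in ball (0 : EuclideanSpace ℝ (Fin 2)) δ₀, (f x - f 0) * g x| ≤ ε₁ * M := by
      have hb : ∀ᵐ x ∂(volume.restrict (ball (0 : EuclideanSpace ℝ (Fin 2)) δ₀)),
          ‖(f x - f 0) * g x‖ ≤ ε₁ * g x := by
        filter_upwards [ae_restrict_mem measurableSet_ball] with x hx
        rw [norm_mul, norm_of_nonneg (hgpos x).le]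
        apply mul_le_mul_of_nonneg_right _ (hgpos x).le
        have hdist : dist x 0 < δ₀ := mem_ball.mp hx
        have := hδ₀ x hdist
        rw [Real.dist_eq] at this
        rw [Real.norm_eq_abs]
        exact this.le
      calc |∫ x in ball (0 : EuclideanSpace ℝ (Fin 2)) δ₀, (f x - f 0) * g x|
          ≤ ∫ x in ball (0 : EuclideanSpace ℝ (Fin 2)) δ₀, ε₁ * g x :=
            norm_integral_le_of_norm_le (hgInt.integrableOn.const_mul ε₁) hb
        _ = ε₁ * Iin := by rw [hIindef, integral_const_mul]
        _ ≤ ε₁ * M := mul_le_mul_of_nonneg_left hIinM hε₁.le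
    -- third error term
    have hT3 : |∫ x in (ball (0 : EuclideanSpace ℝ (Fin 2)) δ₀)ᶜ, f x * g x|
        ≤ Em * ∫ x, ‖f x‖ := by
      have hb : ∀ᵐ x ∂(volume.restrict (ball (0 : EuclideanSpace ℝ (Fin 2)) δ₀)ᶜ),
          ‖f x * g x‖ ≤ Em * ‖f x‖ := by
        filter_upwards [ae_restrict_mem measurableSet_ball.compl] with x hx
        have hxnorm : δ₀ ≤ ‖x‖ := by
          have : ¬ dist x 0 < δ₀ := fun h => hx (mem_ball.mpr h)
          rw [dist_zero_right] at this
          linarith [not_lt.mp this]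
        rw [norm_mul, norm_of_nonneg (hgpos x).le, mul_comm]
        apply mul_le_mul_of_nonneg_right _ (norm_nonneg _)
        exact g_le hm0 hm1 ht hCmpos hδ₀pos hxnorm
      calc |∫ x in (ball (0 : EuclideanSpace ℝ (Fin 2)) δ₀)ᶜ, f x * g x|
          ≤ ∫ x in (ball (0 : EuclideanSpace ℝ (Fin 2)) δ₀)ᶜ, Em * ‖f x‖ :=
            norm_integral_le_of_norm_le ((hfInt.norm.const_mul Em).integrableOn) hb
        _ = Em * ∫ x in (ball (0 : EuclideanSpace ℝ (Fin 2)) δ₀)ᶜ, ‖f x‖ := integral_const_mul _ _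
        _ ≤ Em * ∫ x, ‖f x‖ := by
            apply mul_le_mul_of_nonneg_left _ hEmpos
            exact setIntegral_le_integral hfInt.norm
              (Filter.Eventually.of_forall fun x => norm_nonneg _)
    -- putting things together
    rw [Real.dist_eq, hsplit]
    have hT2 : |f 0| * |Iin - L| ≤ |f 0| * (ε / (3 * (|f 0| + 1))) := by
      apply mul_le_mul_of_nonneg_left _ (abs_nonneg _)
      rw [← Real.dist_eq]
      exact hIin.le
    have habs : |(∫ x in ball (0 : EuclideanSpace ℝ (Fin 2)) δ₀, (f x - f 0) * g x)
        + f 0 * Iin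
        + (∫ x in (ball (0 : EuclideanSpace ℝ (Fin 2)) δ₀)ᶜ, f x * g x) - L * f 0|
        ≤ |∫ x in ball (0 : EuclideanSpace ℝ (Fin 2)) δ₀, (f x - f 0) * g x|
          + |f 0| * |Iin - L|
          + |∫ x in (ball (0 : EuclideanSpace ℝ (Fin 2)) δ₀)ᶜ, f x * g x| := by
      set A := ∫ x in ball (0 : EuclideanSpace ℝ (Fin 2)) δ₀, (f x - f 0) * g x
      set B := ∫ x in (ball (0 : EuclideanSpace ℝ (Fin 2)) δ₀)ᶜ, f x * g x
      have h1 : A + f 0 * Iin + B - L * f 0 = A + f 0 * (Iin - L) + B := by ring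
      rw [h1]
      calc |A + f 0 * (Iin - L) + B| ≤ |A + f 0 * (Iin - L)| + |B| := abs_add_le _ _
        _ ≤ |A| + |f 0 * (Iin - L)| + |B| := by linarith [abs_add_le A (f 0 * (Iin - L))]
        _ = |A| + |f 0| * |Iin - L| + |B| := by rw [abs_mul]
    have hfin1 : ε₁ * M < ε / 3 := by
      rw [hε₁def]
      rw [div_mul_eq_mul_div, div_lt_div_iff₀ (by positivity) (by norm_num)]
      nlinarith
    have hfin2 : |f 0| * (ε / (3 * (|f 0| + 1))) < ε / 3 := by
      rw [show |f 0| * (ε / (3 * (|f 0| + 1))) = ε * |f 0| / (3 * (|f 0| + 1)) by ring,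
        div_lt_div_iff₀ (by positivity) (by norm_num)]
      nlinarith [abs_nonneg (f 0)]
    have hfin3 : Em * ∫ x, ‖f x‖ < ε / 3 := by
      have hI1 : (0:ℝ) < (∫ x, ‖f x‖) + 1 := by positivity
      have he' : Em * ((∫ x, ‖f x‖) + 1) < ε / (3 * ((∫ x, ‖f x‖) + 1)) * ((∫ x, ‖f x‖) + 1) :=
        mul_lt_mul_of_pos_right hE hI1
      have heq : ε / (3 * ((∫ x, ‖f x‖) + 1)) * ((∫ x, ‖f x‖) + 1) = ε / 3 := by
        field_simp
      have hmono : Em * ∫ x, ‖f x‖ ≤ Em * ((∫ x, ‖f x‖) + 1) :=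
        mul_le_mul_of_nonneg_left (by linarith) hEmpos
      linarith
    linarith [habs, hT1, hT2, hT3, hfin1, hfin2, hfin3]
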